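/- Let α ∈ W^*. Then α ∈ 𝔇^{(z)}_{σ₁,σ₂}(W) if and only if for every v ∈ V^{(j₁,j₂)} with j₁, j₂ ∈ ℤ there exist nonnegative integers r and s such that x^{s+j₁/T}(x+z)^{r+j₂/T} Y_W^*(v, x+z)α ∈ W^*[[x]]. -/

import Mathlib

open scoped BigOperators

noncomputable section

/-- The generalized binomial coefficient `binom(a, n)` for `a : ℂ`, `n : ℕ`. -/
def cbinom (a : ℂ) (n : ℕ) : ℂ := (∏ i ∈ Finset.range n, (a - (i : ℂ))) / (n.factorial : ℂ)

/-- The argument of a complex number normalized to lie in `[0, 2π)`. -/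
def argB (ξ : ℂ) : ℝ := if 0 ≤ Complex.arg ξ then Complex.arg ξ else Complex.arg ξ + 2 * Real.pi

/-- The branch of the logarithm with `log ξ = ln |ξ| + i arg ξ`, `0 ≤ arg ξ < 2π`. -/
def logB (ξ : ℂ) : ℂ := (Real.log ‖ξ‖ : ℂ) + (argB ξ : ℂ) * Complex.I

/-- `ξ ^ α = e^{α log ξ}` with the chosen branch of `log`. -/
def bpow (ξ α : ℂ) : ℂ := Complex.exp (α * logB ξ)

/-- `e^{α π i}`. -/
def epi (α : ℂ) : ℂ := Complex.exp (α * (Real.pi : ℂ) * Complex.I)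

/-!  Formal series are recorded by the coefficient function `f : ℂ → ·`, where `f n` is the
coefficient of `x^{-n-1}`.  The following are the coefficients of the products with
`(x-z)^β`, `(z-x)^β`, `(x+z)^β`, `(z+x)^β` (with the expansion conventions
`(x ± ξ)^β = Σ_{j≥0} binom(β,j) (±ξ)^j x^{β-j}` and
`(ξ ± x)^β = Σ_{j≥0} binom(β,j) ξ^{β-j} (±x)^j`, where `ξ^γ` uses the chosen branch),
and of the substitution `f(x+z)`. -/

/-- Coefficient of `x^{-n-1}` in `(x-z)^β f(x)`. -/
def mulXZ (z β : ℂ) (f : ℂ → ℂ) (n : ℂ) : ℂ :=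
  ∑ᶠ i : ℕ, cbinom β i * (-z) ^ i * f (n + β - (i : ℂ))

/-- Coefficient of `x^{-n-1}` in `(z-x)^β f(x)`. -/
def mulZX (z β : ℂ) (f : ℂ → ℂ) (n : ℂ) : ℂ :=
  ∑ᶠ i : ℕ, cbinom β i * bpow z (β - (i : ℂ)) * (-1 : ℂ) ^ i * f (n + (i : ℂ))

/-- Coefficient of `x^{-n-1}` in `(x+z)^β f(x)`. -/
def mulXpZ (z β : ℂ) (f : ℂ → ℂ) (n : ℂ) : ℂ :=
  ∑ᶠ i : ℕ, cbinom β i * z ^ i * f (n + β - (i : ℂ))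

/-- Coefficient of `x^{-n-1}` in `(z+x)^β f(x)`. -/
def mulZpX (z β : ℂ) (f : ℂ → ℂ) (n : ℂ) : ℂ :=
  ∑ᶠ i : ℕ, cbinom β i * bpow z (β - (i : ℂ)) * f (n + (i : ℂ))

/-- Coefficient of `x^{-n-1}` in `f(x+z) = (e^{z d/dx} f)(x)`. -/
def substZ (z : ℂ) (f : ℂ → ℂ) (n : ℂ) : ℂ :=
  ∑ᶠ i : ℕ, cbinom ((i : ℂ) - n - 1) i * z ^ i * f (n - (i : ℂ))

/-- A vertex algebra over `ℂ`, presented by its components `Y u n = u_n`, with the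
Jacobi identity in (componentwise) Borcherds form. -/
structure VertexAlg (V : Type*) [AddCommGroup V] [Module ℂ V] where
  Y : V →ₗ[ℂ] ℤ → V →ₗ[ℂ] V
  one : V
  trunc : ∀ u v : V, ∃ N : ℤ, ∀ n : ℤ, N ≤ n → Y u n v = 0
  vacuum_eq : ∀ (n : ℤ) (v : V), Y one n v = if n = -1 then v else 0
  create : ∀ (u : V) (n : ℤ), 0 ≤ n → Y u n one = 0
  create' : ∀ u : V, Y u (-1) one = u
  jacobi : ∀ (u v w : V) (a b c : ℤ),
    (∑ᶠ i : ℕ, ((-1 : ℂ) ^ i * cbinom (a : ℂ) i) •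
      (Y u (a + b - (i : ℤ)) (Y v (c + (i : ℤ)) w)
        - ((-1 : ℂ) ^ a) • Y v (a + c - (i : ℤ)) (Y u (b + (i : ℤ)) w)))
    = ∑ᶠ i : ℕ, cbinom (b : ℂ) i • Y (Y u (a + (i : ℤ)) v) (b + c - (i : ℤ)) w

/-- An automorphism of a vertex algebra. -/
structure VAAut {V : Type*} [AddCommGroup V] [Module ℂ V] (A : VertexAlg V) where
  g : V ≃ₗ[ℂ] V
  map_one : g A.one = A.one
  map_Y : ∀ (u : V) (n : ℤ) (v : V), g (A.Y u n v) = A.Y (g u) n (g v)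

/-- `v` lies in the eigenspace `V^j = {v | σ v = e^{2πij/T} v}`. -/
def eig {V : Type*} [AddCommGroup V] [Module ℂ V] {A : VertexAlg V}
    (σ : VAAut A) (T : ℕ) (j : ℤ) (v : V) : Prop :=
  σ.g v = Complex.exp (2 * (Real.pi : ℂ) * Complex.I * (j : ℂ) / (T : ℂ)) • v

/-- A (weak) `σ`-twisted module for a vertex algebra, presented componentwise:
`Y v n` is the coefficient of `x^{-n-1}` in `Y_W(v,x)`; the `σ`-twisted Jacobi
identity is stated coefficientwise. -/
structure TwistedModule {V : Type*} [AddCommGroup V] [Module ℂ V]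
    (W : Type*) [AddCommGroup W] [Module ℂ W]
    (A : VertexAlg V) (σ : VAAut A) (T : ℕ) where
  Y : V →ₗ[ℂ] ℂ → W →ₗ[ℂ] W
  vacuum_eq : ∀ (n : ℂ) (w : W), Y A.one n w = if n = -1 then w else 0
  latt : ∀ (v : V) (n : ℂ), (∀ m : ℤ, n ≠ (m : ℂ) / (T : ℂ)) → Y v n = 0
  eig_supp : ∀ (j : ℤ) (v : V), eig σ T j v →
    ∀ n : ℂ, (∀ m : ℤ, n ≠ (j : ℂ) / (T : ℂ) + (m : ℂ)) → Y v n = 0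
  trunc : ∀ (v : V) (w : W), ∃ N : ℤ, ∀ m : ℤ, N ≤ m → Y v ((m : ℂ) / (T : ℂ)) w = 0
  jacobi : ∀ (j : ℤ) (u : V), eig σ T j u → ∀ (v : V) (w : W) (a b c : ℤ),
    (∑ᶠ i : ℕ, ((-1 : ℂ) ^ i * cbinom (a : ℂ) i) •
      (Y u ((a : ℂ) + (b : ℂ) / (T : ℂ) - (i : ℂ)) (Y v ((c : ℂ) / (T : ℂ) + (i : ℂ)) w)
        - ((-1 : ℂ) ^ a) •
          Y v ((a : ℂ) + (c : ℂ) / (T : ℂ) - (i : ℂ)) (Y u ((b : ℂ) / (T : ℂ) + (i : ℂ)) w)))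
    = if (T : ℤ) ∣ (b - j) then
        (∑ᶠ i : ℕ, cbinom ((b : ℂ) / (T : ℂ)) i •
          Y (A.Y u (a + (i : ℤ)) v) ((b : ℂ) / (T : ℂ) + (c : ℂ) / (T : ℂ) - (i : ℂ)) w)
      else 0

/-- A right `σ`-twisted module for a vertex algebra, presented componentwise
(opposite twisted Jacobi identity, coefficientwise). -/
structure RightTwistedModule {V : Type*} [AddCommGroup V] [Module ℂ V]
    (W : Type*) [AddCommGroup W] [Module ℂ W]
    (A : VertexAlg V) (σ : VAAut A) (T : ℕ) where
  Y : V →ₗ[ℂ] ℂ → W →ₗ[ℂ] W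
  vacuum_eq : ∀ (n : ℂ) (w : W), Y A.one n w = if n = -1 then w else 0
  latt : ∀ (v : V) (n : ℂ), (∀ m : ℤ, n ≠ (m : ℂ) / (T : ℂ)) → Y v n = 0
  trunc : ∀ (v : V) (w : W), ∃ N : ℤ, ∀ m : ℤ, m ≤ N → Y v ((m : ℂ) / (T : ℂ)) w = 0
  jacobi : ∀ (j : ℤ) (u : V), eig σ T j u → ∀ (v : V) (w : W) (a b c : ℤ),
    (∑ᶠ i : ℕ, ((-1 : ℂ) ^ i * cbinom (a : ℂ) i) •
      (Y v ((c : ℂ) / (T : ℂ) + (i : ℂ)) (Y u ((a : ℂ) + (b : ℂ) / (T : ℂ) - (i : ℂ)) w)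
        - ((-1 : ℂ) ^ a) •
          Y u ((b : ℂ) / (T : ℂ) + (i : ℂ)) (Y v ((a : ℂ) + (c : ℂ) / (T : ℂ) - (i : ℂ)) w)))
    = if (T : ℤ) ∣ (b + j) then
        (∑ᶠ i : ℕ, cbinom ((b : ℂ) / (T : ℂ)) i •
          Y (A.Y u (a + (i : ℤ)) v) ((b : ℂ) / (T : ℂ) + (c : ℂ) / (T : ℂ) - (i : ℂ)) w)
      else 0

section DualSetup

variable {V : Type*} [AddCommGroup V] [Module ℂ V] {W : Type*} [AddCommGroup W] [Module ℂ W]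
variable {A : VertexAlg V}

/-- The series `Y_W^*(v,x)α` paired with `w ∈ W`:  `m ↦ ⟨α, (Y_W v)_m w⟩`. -/
def Ydual (YW : V →ₗ[ℂ] ℂ → W →ₗ[ℂ] W) (v : V) (α : W → ℂ) (w : W) : ℂ → ℂ :=
  fun m => α (YW v m w)

/-- The condition `x^{j₂/T}(x-z)^{k+j₁/T} Y_W^*(v,x)α ∈ W^*((x))` (integer exponents and
lower truncation in `x`, uniformly in `w`). -/
def DCond (T : ℕ) (z : ℂ) (j₁ j₂ : ℤ) (YW : V →ₗ[ℂ] ℂ → W →ₗ[ℂ] W)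
    (v : V) (α : W → ℂ) (k : ℕ) : Prop :=
  (∀ n : ℂ, (∀ m : ℤ, n ≠ (m : ℂ)) → ∀ w : W,
    mulXZ z ((k : ℂ) + (j₁ : ℂ) / (T : ℂ)) (Ydual YW v α w) (n + (j₂ : ℂ) / (T : ℂ)) = 0) ∧
  (∃ N : ℤ, ∀ m : ℤ, N ≤ m → ∀ w : W,
    mulXZ z ((k : ℂ) + (j₁ : ℂ) / (T : ℂ)) (Ydual YW v α w) ((m : ℂ) + (j₂ : ℂ) / (T : ℂ)) = 0)

/-- The space `𝔇^{(z)}_{σ₁,σ₂}(W) ⊆ W^*`:  linear functionals `α` such that for every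
`v ∈ V^{(j₁,j₂)}` there is `k ∈ ℕ` with `x^{j₂/T}(x-z)^{k+j₁/T} Y_W^*(v,x)α ∈ W^*((x))`. -/
def Dspace (σ₁ σ₂ : VAAut A) (T : ℕ) (YW : V →ₗ[ℂ] ℂ → W →ₗ[ℂ] W) (z : ℂ) :
    Set (W → ℂ) :=
  { α | IsLinearMap ℂ α ∧ ∀ (j₁ j₂ : ℤ) (v : V), eig σ₁ T j₁ v → eig σ₂ T j₂ v →
      ∃ k : ℕ, DCond T z j₁ j₂ YW v α k }

/-- `YR` is the operation `Y_σ^R` on `𝔇^{(z)}_{σ₁,σ₂}(W)`:  it is linear in `v`, for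
`v ∈ V^{(j₁,j₂)}` and `α ∈ 𝔇` the series `Y_σ^R(v,x)α` has exponent support in
`x^{-j₂/T}(·)((x))`-form, and for every admissible `k ∈ ℕ`
`e^{(k+j₁/T)πi}(z-x)^{k+j₁/T} Y_σ^R(v,x)α = (x-z)^{k+j₁/T} Y_W^*(v,x)α`. -/
def IsYR (σ₁ σ₂ : VAAut A) (T : ℕ) (YW : V →ₗ[ℂ] ℂ → W →ₗ[ℂ] W) (z : ℂ)
    (YR : V → ℂ → (W → ℂ) → W → ℂ) : Prop :=
  (∀ (n : ℂ) (α : W → ℂ), IsLinearMap ℂ fun v => YR v n α) ∧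
  (∀ (j₁ j₂ : ℤ) (v : V), eig σ₁ T j₁ v → eig σ₂ T j₂ v →
    ∀ α ∈ Dspace σ₁ σ₂ T YW z,
      (∀ n : ℂ, (∀ m : ℤ, n ≠ (j₂ : ℂ) / (T : ℂ) + (m : ℂ)) → YR v n α = 0) ∧
      (∃ N : ℤ, ∀ m : ℤ, N ≤ m → YR v ((j₂ : ℂ) / (T : ℂ) + (m : ℂ)) α = 0) ∧
      (∀ k : ℕ, DCond T z j₁ j₂ YW v α k → ∀ (n : ℂ) (w : W),
        epi ((k : ℂ) + (j₁ : ℂ) / (T : ℂ)) *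
            mulZX z ((k : ℂ) + (j₁ : ℂ) / (T : ℂ)) (fun m => YR v m α w) n
          = mulXZ z ((k : ℂ) + (j₁ : ℂ) / (T : ℂ)) (Ydual YW v α w) n))

/-- The condition `x^{j₁/T}(x+z)^{l+j₂/T} Y_W^*(v,x+z)α ∈ W^*((x))`. -/
def LCond (T : ℕ) (z : ℂ) (j₁ j₂ : ℤ) (YW : V →ₗ[ℂ] ℂ → W →ₗ[ℂ] W)
    (v : V) (α : W → ℂ) (l : ℕ) : Prop :=
  (∀ n : ℂ, (∀ m : ℤ, n ≠ (m : ℂ)) → ∀ w : W,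
    mulXpZ z ((l : ℂ) + (j₂ : ℂ) / (T : ℂ)) (substZ z (Ydual YW v α w))
      (n + (j₁ : ℂ) / (T : ℂ)) = 0) ∧
  (∃ N : ℤ, ∀ m : ℤ, N ≤ m → ∀ w : W,
    mulXpZ z ((l : ℂ) + (j₂ : ℂ) / (T : ℂ)) (substZ z (Ydual YW v α w))
      ((m : ℂ) + (j₁ : ℂ) / (T : ℂ)) = 0)

/-- `YL` is the operation `Y_σ^L` on `𝔇^{(z)}_{σ₁,σ₂}(W)`:  linear in `v`, with exponent
support in `x^{-j₁/T}(·)((x))`-form, and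
`(z+x)^{l+j₂/T} Y_σ^L(v,x)α = (x+z)^{l+j₂/T} Y_W^*(v,x+z)α` for every admissible `l ∈ ℕ`. -/
def IsYL (σ₁ σ₂ : VAAut A) (T : ℕ) (YW : V →ₗ[ℂ] ℂ → W →ₗ[ℂ] W) (z : ℂ)
    (YL : V → ℂ → (W → ℂ) → W → ℂ) : Prop :=
  (∀ (n : ℂ) (α : W → ℂ), IsLinearMap ℂ fun v => YL v n α) ∧
  (∀ (j₁ j₂ : ℤ) (v : V), eig σ₁ T j₁ v → eig σ₂ T j₂ v →
    ∀ α ∈ Dspace σ₁ σ₂ T YW z,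
      (∀ n : ℂ, (∀ m : ℤ, n ≠ (j₁ : ℂ) / (T : ℂ) + (m : ℂ)) → YL v n α = 0) ∧
      (∃ N : ℤ, ∀ m : ℤ, N ≤ m → YL v ((j₁ : ℂ) / (T : ℂ) + (m : ℂ)) α = 0) ∧
      (∀ l : ℕ, LCond T z j₁ j₂ YW v α l → ∀ (n : ℂ) (w : W),
        mulZpX z ((l : ℂ) + (j₂ : ℂ) / (T : ℂ)) (fun m => YL v m α w) n
          = mulXpZ z ((l : ℂ) + (j₂ : ℂ) / (T : ℂ)) (substZ z (Ydual YW v α w)) n))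

end DualSetup

section AuxProof

open Finset Polynomial

lemma cbinom_zero' (a : ℂ) : cbinom a 0 = 1 := by simp [cbinom]

lemma cbinom_nat_eq_zero {c i : ℕ} (h : c < i) : cbinom (c : ℂ) i = 0 := by
  unfold cbinom
  rw [Finset.prod_eq_zero (Finset.mem_range.2 h) (by simp)]
  simp

lemma cbinom_natCast (a i : ℕ) : cbinom (a : ℂ) i = (a.choose i : ℂ) := by
  rcases lt_or_ge a i with h | h
  · rw [cbinom_nat_eq_zero h, Nat.choose_eq_zero_of_lt h]; simp
  · unfold cbinom
    have hp : ∏ t ∈ range i, ((a : ℂ) - (t : ℂ)) = ((a.descFactorial i : ℕ) : ℂ) := by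
      rw [Nat.descFactorial_eq_prod_range, Nat.cast_prod]
      refine Finset.prod_congr rfl fun t ht => ?_
      rw [Nat.cast_sub (le_of_lt (lt_of_lt_of_le (mem_range.1 ht) h))]
    rw [hp, Nat.descFactorial_eq_factorial_mul_choose]
    push_cast
    rw [mul_comm]
    field_simp [Nat.factorial_ne_zero]

def cpoly (k : ℕ) : Polynomial ℂ :=
  (∏ t ∈ Finset.range k, (Polynomial.X - Polynomial.C (t : ℂ))) * Polynomial.C ((k.factorial : ℂ))⁻¹

lemma cpoly_eval (k : ℕ) (a : ℂ) : (cpoly k).eval a = cbinom a k := by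
  simp [cpoly, cbinom, Polynomial.eval_prod, div_eq_mul_inv]

lemma vandermonde_nat (a b m : ℕ) :
    ∑ i ∈ range (m + 1), cbinom (a : ℂ) i * cbinom (b : ℂ) (m - i) = cbinom ((a : ℂ) + (b : ℂ)) m := by
  have h := Nat.add_choose_eq a b m
  rw [Finset.Nat.sum_antidiagonal_eq_sum_range_succ_mk] at h
  have h' : (((a + b).choose m : ℕ) : ℂ) = ∑ i ∈ range (m + 1), (a.choose i : ℂ) * (b.choose (m - i) : ℂ) := by
    rw [h]; push_cast; ring
  simp only [cbinom_natCast]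
  rw [← Nat.cast_add, cbinom_natCast, h']

lemma infinite_nat_cast_eq {p q : Polynomial ℂ} (h : ∀ a : ℕ, p.eval (a : ℂ) = q.eval (a : ℂ)) : p = q := by
  apply Polynomial.eq_of_infinite_eval_eq
  apply Set.Infinite.mono (s := Set.range (Nat.cast : ℕ → ℂ))
  · rintro x ⟨a, rfl⟩; exact h a
  · exact Set.infinite_range_of_injective Nat.cast_injective

lemma vandermonde_aux (b m : ℕ) (a : ℂ) :
    ∑ i ∈ range (m + 1), cbinom a i * cbinom (b : ℂ) (m - i) = cbinom (a + (b : ℂ)) m := by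
  have hpq : (∑ i ∈ range (m + 1), cpoly i * Polynomial.C (cbinom (b : ℂ) (m - i)))
      = (cpoly m).comp (Polynomial.X + Polynomial.C (b : ℂ)) := by
    apply infinite_nat_cast_eq
    intro x
    simp only [Polynomial.eval_finset_sum, Polynomial.eval_mul, Polynomial.eval_C,
      Polynomial.eval_comp, Polynomial.eval_add, Polynomial.eval_X, cpoly_eval]
    exact vandermonde_nat x b m
  have := congrArg (Polynomial.eval a) hpq
  simpa only [Polynomial.eval_finset_sum, Polynomial.eval_mul, Polynomial.eval_C,
    Polynomial.eval_comp, Polynomial.eval_add, Polynomial.eval_X, cpoly_eval] using this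

lemma cbinom_vandermonde (a b : ℂ) (m : ℕ) :
    ∑ i ∈ range (m + 1), cbinom a i * cbinom b (m - i) = cbinom (a + b) m := by
  have hpq : (∑ i ∈ range (m + 1), Polynomial.C (cbinom a i) * cpoly (m - i))
      = (cpoly m).comp (Polynomial.X + Polynomial.C a) := by
    apply infinite_nat_cast_eq
    intro x
    simp only [Polynomial.eval_finset_sum, Polynomial.eval_mul, Polynomial.eval_C,
      Polynomial.eval_comp, Polynomial.eval_add, Polynomial.eval_X, cpoly_eval]
    rw [vandermonde_aux x m a, add_comm]
  have := congrArg (Polynomial.eval b) hpq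
  simpa only [Polynomial.eval_finset_sum, Polynomial.eval_mul, Polynomial.eval_C,
    Polynomial.eval_comp, Polynomial.eval_add, Polynomial.eval_X, cpoly_eval, add_comm b a] using this

lemma cbinom_reflect (n : ℂ) (i : ℕ) : cbinom ((i : ℂ) - n - 1) i = (-1 : ℂ) ^ i * cbinom n i := by
  unfold cbinom
  rw [← mul_div_assoc]
  congr 1
  have h1 : ∀ t ∈ range i, ((i : ℂ) - n - 1 - (t : ℂ)) = -1 * (n - ((i - 1 - t : ℕ) : ℂ)) := by
    intro t ht
    have ht' := mem_range.1 ht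
    have h2 : ((i - 1 - t : ℕ) : ℂ) = (i : ℂ) - 1 - (t : ℂ) := by
      have : i - 1 - t = i - (1 + t) := by omega
      rw [this, Nat.cast_sub (by omega)]
      push_cast; ring
    rw [h2]; ring
  rw [Finset.prod_congr rfl h1, Finset.prod_mul_distrib, Finset.prod_const]
  congr 1
  · simp
  · exact Finset.prod_range_reflect (fun t => n - (t : ℂ)) i

def Adm (f : ℂ → ℂ) : Prop := ∀ c : ℂ, {i : ℕ | f (c - (i : ℂ)) ≠ 0}.Finite

lemma Adm.bound {f : ℂ → ℂ} (hf : Adm f) (c : ℂ) :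
    ∃ B : ℕ, ∀ i : ℕ, B ≤ i → f (c - (i : ℂ)) = 0 := by
  obtain ⟨B, hB⟩ := (hf c).bddAbove
  refine ⟨B + 1, fun i hi => ?_⟩
  by_contra hne
  have := hB (Set.mem_setOf_eq ▸ hne : i ∈ {i : ℕ | f (c - (i : ℂ)) ≠ 0})
  omega

lemma sum_square_to_diag (B : ℕ) (u : ℕ → ℕ → ℂ) (hu : ∀ i j, B ≤ i + j → u i j = 0) :
    ∑ i ∈ Finset.range B, ∑ j ∈ Finset.range B, u i j
      = ∑ m ∈ Finset.range B, ∑ i ∈ Finset.range (m + 1), u i (m - i) := by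
  have hR : ∀ m : ℕ, ∑ i ∈ Finset.range (m + 1), u i (m - i)
      = ∑ p ∈ Finset.HasAntidiagonal.antidiagonal m, u p.1 p.2 := fun m =>
    (Finset.Nat.sum_antidiagonal_eq_sum_range_succ_mk (fun p => u p.1 p.2) m).symm
  simp only [hR]
  rw [← Finset.sum_biUnion]
  · rw [← Finset.sum_product']
    symm
    apply Finset.sum_subset
    · intro p hp
      simp only [Finset.mem_biUnion, Finset.HasAntidiagonal.mem_antidiagonal, Finset.mem_range] at hp
      obtain ⟨m, hm, hpm⟩ := hp
      simp only [Finset.mem_product, Finset.mem_range]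
      omega
    · intro p hp hnp
      simp only [Finset.mem_biUnion, Finset.HasAntidiagonal.mem_antidiagonal, Finset.mem_range] at hnp
      push_neg at hnp
      exact hu p.1 p.2 (by by_contra h; exact hnp (p.1 + p.2) (by omega) rfl)
  · intro m₁ h₁ m₂ h₂ hne
    simp only [Function.onFun, Finset.disjoint_left]
    intro p hp₁ hp₂
    simp only [Finset.HasAntidiagonal.mem_antidiagonal] at hp₁ hp₂
    exact hne (by omega)

lemma double_finsum (B : ℕ) (u : ℕ → ℕ → ℂ) (hu : ∀ i j, B ≤ i + j → u i j = 0) :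
    ∑ᶠ i : ℕ, (∑ᶠ j : ℕ, u i j)
      = ∑ m ∈ Finset.range B, ∑ i ∈ Finset.range (m + 1), u i (m - i) := by
  have hinner : ∀ i, (∑ᶠ j : ℕ, u i j) = ∑ j ∈ Finset.range B, u i j := by
    intro i
    apply finsum_eq_sum_of_support_subset
    intro j hj
    simp only [Function.mem_support] at hj
    simp only [Finset.coe_range, Set.mem_Iio]
    by_contra h
    exact hj (hu i j (by omega))
  rw [finsum_congr hinner]
  rw [finsum_eq_sum_of_support_subset _ (s := Finset.range B) ?_]
  · exact sum_square_to_diag B u hu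
  · intro i hi
    simp only [Function.mem_support] at hi
    simp only [Finset.coe_range, Set.mem_Iio]
    by_contra h
    exact hi (Finset.sum_eq_zero fun j _ => hu i j (by omega))

lemma adm_substZ {f : ℂ → ℂ} (hf : Adm f) (z : ℂ) : Adm (substZ z f) := by
  intro c
  obtain ⟨B, hB⟩ := hf.bound c
  apply Set.Finite.subset (Set.finite_Iio B)
  intro i hi
  simp only [Set.mem_setOf_eq] at hi
  simp only [Set.mem_Iio]
  by_contra h
  apply hi
  unfold substZ
  apply finsum_eq_zero_of_forall_eq_zero
  intro j
  have harg : c - (i : ℂ) - (j : ℂ) = c - ((i + j : ℕ) : ℂ) := by push_cast; ring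
  rw [harg, hB _ (by omega), mul_zero]

lemma mulXpZ_neg_eq (z β : ℂ) (f : ℂ → ℂ) (n : ℂ) : mulXpZ (-z) β f n = mulXZ z β f n := rfl

lemma mulXZ_neg_eq (z β : ℂ) (f : ℂ → ℂ) (n : ℂ) : mulXZ (-z) β f n = mulXpZ z β f n := by
  simp only [mulXZ, mulXpZ, neg_neg]

lemma mulXpZ_shift (z γ β : ℂ) (g : ℂ → ℂ) (n : ℂ) :
    mulXpZ z γ (fun m => g (m + β)) n = mulXpZ z γ g (n + β) := by
  unfold mulXpZ
  apply finsum_congr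
  intro i
  show cbinom γ i * z ^ i * g (n + γ - (i : ℂ) + β) = _
  rw [show n + γ - (i : ℂ) + β = n + β + γ - (i : ℂ) from by ring]

lemma mulXZ_shift (z γ β : ℂ) (g : ℂ → ℂ) (n : ℂ) :
    mulXZ z γ (fun m => g (m + β)) n = mulXZ z γ g (n + β) := by
  unfold mulXZ
  apply finsum_congr
  intro i
  show cbinom γ i * (-z) ^ i * g (n + γ - (i : ℂ) + β) = _
  rw [show n + γ - (i : ℂ) + β = n + β + γ - (i : ℂ) from by ring]

lemma substZ_powerSeries (z : ℂ) (h : ℂ → ℂ)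
    (hh : ∀ n : ℂ, (¬ ∃ m : ℤ, n = (m : ℂ) ∧ m ≤ -1) → h n = 0) :
    ∀ n : ℂ, (¬ ∃ m : ℤ, n = (m : ℂ) ∧ m ≤ -1) → substZ z h n = 0 := by
  intro n hn
  unfold substZ
  apply finsum_eq_zero_of_forall_eq_zero
  intro i
  by_cases hex : ∃ m : ℤ, n - (i : ℂ) = (m : ℂ) ∧ m ≤ -1
  · obtain ⟨m, hm, hm1⟩ := hex
    have hn' : n = ((m + (i : ℤ) : ℤ) : ℂ) := by push_cast; linear_combination hm
    have hge : (0 : ℤ) ≤ m + i := by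
      by_contra hlt
      exact hn ⟨m + i, hn', by omega⟩
    have harg : (i : ℂ) - n - 1 = (((-(m + 1)).toNat : ℕ) : ℂ) := by
      rw [hn']
      have : (((-(m + 1)).toNat : ℕ) : ℂ) = ((((-(m + 1)).toNat : ℤ)) : ℂ) := by push_cast; ring
      rw [this, Int.toNat_of_nonneg (by omega : (0 : ℤ) ≤ -(m + 1))]
      push_cast; ring
    rw [harg, cbinom_nat_eq_zero (by omega), zero_mul, zero_mul]
  · rw [hh _ hex, mul_zero]

lemma ML_coeff (z β γ n : ℂ) (f : ℂ → ℂ) (m : ℕ) :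
    ∑ j ∈ Finset.range (m + 1), cbinom γ j * z ^ j *
        (cbinom (((m - j : ℕ) : ℂ) - (n + γ - (j : ℂ) + β) - 1) (m - j) * z ^ (m - j) *
          f (n + γ - (j : ℂ) + β - ((m - j : ℕ) : ℂ)))
    = ∑ i ∈ Finset.range (m + 1), cbinom ((i : ℂ) - n - 1) i * z ^ i *
        (cbinom β (m - i) * (-z) ^ (m - i) * f (n - (i : ℂ) + γ + β - ((m - i : ℕ) : ℂ))) := by
  have hL : ∀ j ∈ Finset.range (m + 1), cbinom γ j * z ^ j *
        (cbinom (((m - j : ℕ) : ℂ) - (n + γ - (j : ℂ) + β) - 1) (m - j) * z ^ (m - j) *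
          f (n + γ - (j : ℂ) + β - ((m - j : ℕ) : ℂ)))
      = cbinom γ j * cbinom ((m : ℂ) - n - γ - β - 1) (m - j) *
          (z ^ m * f (n + γ + β - (m : ℂ))) := by
    intro j hj
    have hj' : j ≤ m := Finset.mem_range_succ_iff.1 hj
    have hc : ((m - j : ℕ) : ℂ) = (m : ℂ) - (j : ℂ) := by
      rw [Nat.cast_sub hj']
    have harg1 : ((m - j : ℕ) : ℂ) - (n + γ - (j : ℂ) + β) - 1 = (m : ℂ) - n - γ - β - 1 := by
      rw [hc]; ring
    have harg2 : n + γ - (j : ℂ) + β - ((m - j : ℕ) : ℂ) = n + γ + β - (m : ℂ) := by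
      rw [hc]; ring
    have hz : z ^ j * z ^ (m - j) = z ^ m := by
      rw [← pow_add, Nat.add_sub_cancel' hj']
    rw [harg1, harg2]
    calc cbinom γ j * z ^ j * (cbinom ((m : ℂ) - n - γ - β - 1) (m - j) * z ^ (m - j) *
            f (n + γ + β - (m : ℂ)))
        = cbinom γ j * cbinom ((m : ℂ) - n - γ - β - 1) (m - j) *
            ((z ^ j * z ^ (m - j)) * f (n + γ + β - (m : ℂ))) := by ring
      _ = _ := by rw [hz]
  have hR : ∀ i ∈ Finset.range (m + 1), cbinom ((i : ℂ) - n - 1) i * z ^ i *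
        (cbinom β (m - i) * (-z) ^ (m - i) * f (n - (i : ℂ) + γ + β - ((m - i : ℕ) : ℂ)))
      = cbinom n i * cbinom β (m - i) *
          ((-1 : ℂ) ^ m * (z ^ m * f (n + γ + β - (m : ℂ)))) := by
    intro i hi
    have hi' : i ≤ m := Finset.mem_range_succ_iff.1 hi
    have hc : ((m - i : ℕ) : ℂ) = (m : ℂ) - (i : ℂ) := by
      rw [Nat.cast_sub hi']
    have harg : n - (i : ℂ) + γ + β - ((m - i : ℕ) : ℂ) = n + γ + β - (m : ℂ) := by
      rw [hc]; ring
    have hz : z ^ i * z ^ (m - i) = z ^ m := by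
      rw [← pow_add, Nat.add_sub_cancel' hi']
    have hs : (-1 : ℂ) ^ i * (-1 : ℂ) ^ (m - i) = (-1 : ℂ) ^ m := by
      rw [← pow_add, Nat.add_sub_cancel' hi']
    rw [harg, cbinom_reflect n i, neg_pow z (m - i)]
    calc (-1 : ℂ) ^ i * cbinom n i * z ^ i *
            (cbinom β (m - i) * ((-1) ^ (m - i) * z ^ (m - i)) * f (n + γ + β - (m : ℂ)))
        = cbinom n i * cbinom β (m - i) *
            (((-1 : ℂ) ^ i * (-1 : ℂ) ^ (m - i)) * ((z ^ i * z ^ (m - i)) *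
              f (n + γ + β - (m : ℂ)))) := by ring
      _ = _ := by rw [hz, hs]
  rw [Finset.sum_congr rfl hL, Finset.sum_congr rfl hR, ← Finset.sum_mul, ← Finset.sum_mul,
    cbinom_vandermonde, cbinom_vandermonde,
    show γ + ((m : ℂ) - n - γ - β - 1) = (m : ℂ) - (n + β) - 1 from by ring,
    cbinom_reflect (n + β) m]
  ring

lemma ML (z β γ : ℂ) (f : ℂ → ℂ) (hf : Adm f) (n : ℂ) :
    mulXpZ z γ (fun m => substZ z f (m + β)) n
      = substZ z (fun m => mulXZ z β f (m + γ)) n := by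
  obtain ⟨B, hB⟩ := hf.bound (n + γ + β)
  have hzero : ∀ (a b : ℕ), B ≤ a + b → ∀ c : ℂ, c = n + γ + β - ((a + b : ℕ) : ℂ) → f c = 0 := by
    intro a b hab c hc
    rw [hc]; exact hB _ hab
  have hL : mulXpZ z γ (fun m => substZ z f (m + β)) n
      = ∑ᶠ j : ℕ, ∑ᶠ i : ℕ, cbinom γ j * z ^ j *
          (cbinom ((i : ℂ) - (n + γ - (j : ℂ) + β) - 1) i * z ^ i *
            f (n + γ - (j : ℂ) + β - (i : ℂ))) := by
    simp only [mulXpZ, substZ]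
    apply finsum_congr
    intro j
    apply mul_finsum
  have hR : substZ z (fun m => mulXZ z β f (m + γ)) n
      = ∑ᶠ i : ℕ, ∑ᶠ j : ℕ, cbinom ((i : ℂ) - n - 1) i * z ^ i *
          (cbinom β j * (-z) ^ j * f (n - (i : ℂ) + γ + β - (j : ℂ))) := by
    simp only [substZ, mulXZ]
    apply finsum_congr
    intro i
    apply mul_finsum
  rw [hL, hR]
  rw [double_finsum B _ (fun j i hji => by
    rw [show n + γ - (j : ℂ) + β - (i : ℂ) = n + γ + β - ((j + i : ℕ) : ℂ) from by push_cast; ring,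
      hB _ hji, mul_zero, mul_zero]),
    double_finsum B _ (fun i j hij => by
    rw [show n - (i : ℂ) + γ + β - (j : ℂ) = n + γ + β - ((i + j : ℕ) : ℂ) from by push_cast; ring,
      hB _ hij, mul_zero, mul_zero])]
  refine Finset.sum_congr rfl fun m _ => ?_
  exact ML_coeff z β γ n f m

lemma substZ_neg_substZ (z : ℂ) (f : ℂ → ℂ) (hf : Adm f) (n : ℂ) :
    substZ (-z) (substZ z f) n = f n := by
  obtain ⟨B, hB⟩ := hf.bound n
  have hL : substZ (-z) (substZ z f) n
      = ∑ᶠ i : ℕ, ∑ᶠ j : ℕ, cbinom ((i : ℂ) - n - 1) i * (-z) ^ i *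
          (cbinom ((j : ℂ) - (n - (i : ℂ)) - 1) j * z ^ j * f (n - (i : ℂ) - (j : ℂ))) := by
    simp only [substZ]
    apply finsum_congr
    intro i
    apply mul_finsum
  rw [hL, double_finsum B _ (fun i j hij => by
    rw [show n - (i : ℂ) - (j : ℂ) = n - ((i + j : ℕ) : ℂ) from by push_cast; ring,
      hB _ hij, mul_zero, mul_zero])]
  have hper : ∀ m ∈ Finset.range B, (∑ i ∈ Finset.range (m + 1),
        cbinom ((i : ℂ) - n - 1) i * (-z) ^ i *
          (cbinom (((m - i : ℕ) : ℂ) - (n - (i : ℂ)) - 1) (m - i) * z ^ (m - i) *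
            f (n - (i : ℂ) - ((m - i : ℕ) : ℂ))))
      = cbinom ((m : ℂ) - 1) m * (z ^ m * f (n - (m : ℂ))) := by
    intro m _
    have hterm : ∀ i ∈ Finset.range (m + 1), cbinom ((i : ℂ) - n - 1) i * (-z) ^ i *
          (cbinom (((m - i : ℕ) : ℂ) - (n - (i : ℂ)) - 1) (m - i) * z ^ (m - i) *
            f (n - (i : ℂ) - ((m - i : ℕ) : ℂ)))
        = cbinom n i * cbinom ((m : ℂ) - n - 1) (m - i) * (z ^ m * f (n - (m : ℂ))) := by
      intro i hi
      have hi' : i ≤ m := Finset.mem_range_succ_iff.1 hi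
      have hc : ((m - i : ℕ) : ℂ) = (m : ℂ) - (i : ℂ) := by rw [Nat.cast_sub hi']
      have harg1 : ((m - i : ℕ) : ℂ) - (n - (i : ℂ)) - 1 = (m : ℂ) - n - 1 := by rw [hc]; ring
      have harg2 : n - (i : ℂ) - ((m - i : ℕ) : ℂ) = n - (m : ℂ) := by rw [hc]; ring
      have hz : z ^ i * z ^ (m - i) = z ^ m := by rw [← pow_add, Nat.add_sub_cancel' hi']
      have hs : (-1 : ℂ) ^ i * (-1 : ℂ) ^ i = 1 := by
        rw [← pow_add, ← two_mul, pow_mul]; norm_num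
      rw [harg1, harg2, cbinom_reflect n i, neg_pow z i]
      calc (-1 : ℂ) ^ i * cbinom n i * ((-1) ^ i * z ^ i) *
              (cbinom ((m : ℂ) - n - 1) (m - i) * z ^ (m - i) * f (n - (m : ℂ)))
          = cbinom n i * cbinom ((m : ℂ) - n - 1) (m - i) *
              (((-1 : ℂ) ^ i * (-1 : ℂ) ^ i) * ((z ^ i * z ^ (m - i)) * f (n - (m : ℂ)))) := by
            ring
        _ = _ := by rw [hz, hs]; ring
    rw [Finset.sum_congr rfl hterm, ← Finset.sum_mul, cbinom_vandermonde,
      show n + ((m : ℂ) - n - 1) = (m : ℂ) - 1 from by ring]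
  rw [Finset.sum_congr rfl hper]
  rcases Nat.eq_zero_or_pos B with hB0 | hB0
  · subst hB0
    simp only [Finset.range_zero, Finset.sum_empty]
    exact (hB 0 (le_refl 0) ▸ (by rw [Nat.cast_zero, sub_zero]) : (0 : ℂ) = f n).symm ▸ rfl
  · rw [Finset.sum_eq_single_of_mem 0 (Finset.mem_range.2 hB0)]
    · simp [cbinom_zero']
    · intro m _ hm0
      have h1m : 1 ≤ m := Nat.one_le_iff_ne_zero.2 hm0
      have : ((m : ℂ) - 1) = ((m - 1 : ℕ) : ℂ) := by rw [Nat.cast_sub h1m]; push_cast; ring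
      rw [this, cbinom_nat_eq_zero (by omega), zero_mul]


lemma adm_Ydual {V : Type*} [AddCommGroup V] [Module ℂ V] {W : Type*} [AddCommGroup W]
    [Module ℂ W] {A : VertexAlg V} {σ : VAAut A} {T : ℕ} (hT : 0 < T)
    (M : RightTwistedModule W A σ T) (v : V) (α : W → ℂ) (hlin : IsLinearMap ℂ α) (w : W) :
    Adm (Ydual M.Y v α w) := by
  intro c
  have hT0 : (T : ℂ) ≠ 0 := Nat.cast_ne_zero.2 hT.ne'
  by_cases hc : ∃ m₀ : ℤ, c = (m₀ : ℂ) / (T : ℂ)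
  · obtain ⟨m₀, rfl⟩ := hc
    obtain ⟨N, hN⟩ := M.trunc v w
    apply Set.Finite.subset (Set.finite_Iio ((m₀ - N).toNat + 1))
    intro i hi
    simp only [Set.mem_setOf_eq] at hi
    simp only [Set.mem_Iio]
    by_contra h
    push_neg at h
    apply hi
    have harg : (m₀ : ℂ) / (T : ℂ) - (i : ℂ) = (((m₀ - T * i : ℤ)) : ℂ) / (T : ℂ) := by
      field_simp
      simp
    have hle : m₀ - (T : ℤ) * i ≤ N := by
      have h1 : (i : ℤ) ≤ (T : ℤ) * i :=
        le_mul_of_one_le_left (Int.ofNat_nonneg i) (by exact_mod_cast hT)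
      have h2 : ((m₀ - N).toNat : ℤ) + 1 ≤ (i : ℤ) := by exact_mod_cast h
      omega
    unfold Ydual
    rw [harg, hN _ hle]
    exact hlin.map_zero
  · apply Set.Finite.subset Set.finite_empty
    intro i hi
    simp only [Set.mem_setOf_eq] at hi
    exfalso
    apply hi
    unfold Ydual
    have hcond : ∀ m : ℤ, c - (i : ℂ) ≠ (m : ℂ) / (T : ℂ) := by
      intro m heq
      refine hc ⟨m + T * i, ?_⟩
      rw [eq_div_iff hT0]
      rw [sub_eq_iff_eq_add] at heq
      push_cast
      rw [heq]
      field_simp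
    rw [M.latt v _ hcond]
    simp only [LinearMap.zero_apply]
    exact hlin.map_zero

end AuxProof

/-- Lemma 3.9.  For a linear functional `α ∈ W^*`:
`α ∈ 𝔇^{(z)}_{σ₁,σ₂}(W)` if and only if for every `v ∈ V^{(j₁,j₂)}` there exist
`r, s ∈ ℕ` such that `x^{s+j₁/T}(x+z)^{r+j₂/T} Y_W^*(v, x+z) α ∈ W^*[[x]]`. -/
theorem mem_Dspace_iff_shifted_powerSeries
    (V : Type*) [AddCommGroup V] [Module ℂ V] (W : Type*) [AddCommGroup W] [Module ℂ W]
    (A : VertexAlg V) (σ₁ σ₂ σ : VAAut A) (T : ℕ) (hT : 0 < T)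
    (hσ₁ : ∀ v : V, (⇑σ₁.g)^[T] v = v) (hσ₂ : ∀ v : V, (⇑σ₂.g)^[T] v = v)
    (hcommAut : ∀ v : V, σ₁.g (σ₂.g v) = σ₂.g (σ₁.g v))
    (hσ : ∀ v : V, σ.g (σ₁.g (σ₂.g v)) = v)
    (z : ℂ) (hz : z ≠ 0)
    (M : RightTwistedModule W A σ T)
    (α : W → ℂ) (hlin : IsLinearMap ℂ α) :
    α ∈ Dspace σ₁ σ₂ T M.Y z ↔
      ∀ (j₁ j₂ : ℤ) (v : V), eig σ₁ T j₁ v → eig σ₂ T j₂ v →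
        ∃ r s : ℕ, ∀ n : ℂ, (¬ ∃ m : ℤ, n = (m : ℂ) ∧ m ≤ -1) → ∀ w : W,
          mulXpZ z ((r : ℂ) + (j₂ : ℂ) / (T : ℂ)) (substZ z (Ydual M.Y v α w))
            (n + ((s : ℂ) + (j₁ : ℂ) / (T : ℂ))) = 0 := by
  constructor
  · rintro ⟨hlin', hD⟩ j₁ j₂ v h1 h2
    obtain ⟨k, hc1, N, hc2⟩ := hD j₁ j₂ v h1 h2
    refine ⟨N.toNat, k, ?_⟩
    intro n hn w
    set f : ℂ → ℂ := Ydual M.Y v α w with hfdef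
    have hf : Adm f := adm_Ydual hT M v α hlin w
    set β : ℂ := (k : ℂ) + (j₁ : ℂ) / (T : ℂ) with hβ
    set γ : ℂ := ((N.toNat : ℕ) : ℂ) + (j₂ : ℂ) / (T : ℂ) with hγ
    have hH : ∀ m : ℂ, (¬ ∃ mm : ℤ, m = (mm : ℂ) ∧ mm ≤ -1) → mulXZ z β f (m + γ) = 0 := by
      intro m hm
      by_cases hint : ∃ mm : ℤ, m = (mm : ℂ)
      · obtain ⟨mm, rfl⟩ := hint
        have hmm : 0 ≤ mm := by
          by_contra hlt
          exact hm ⟨mm, rfl, by omega⟩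
        have harg : (mm : ℂ) + γ = (((mm + (N.toNat : ℤ) : ℤ)) : ℂ) + (j₂ : ℂ) / (T : ℂ) := by
          rw [hγ]; push_cast; ring
        rw [harg]
        refine hc2 (mm + (N.toNat : ℤ)) ?_ w
        have := Int.self_le_toNat N
        omega
      · push_neg at hint
        have harg : m + γ = (m + ((N.toNat : ℕ) : ℂ)) + (j₂ : ℂ) / (T : ℂ) := by
          rw [hγ]; ring
        rw [harg]
        refine hc1 (m + ((N.toNat : ℕ) : ℂ)) ?_ w
        intro mm heq
        refine hint (mm - (N.toNat : ℤ)) ?_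
        push_cast
        linear_combination heq
    have hgoal := ML z β γ f hf n
    rw [mulXpZ_shift] at hgoal
    rw [hgoal]
    exact substZ_powerSeries z _ hH n hn
  · intro h
    refine ⟨hlin, ?_⟩
    intro j₁ j₂ v h1 h2
    obtain ⟨r, s, hrs⟩ := h j₁ j₂ v h1 h2
    set β₁ : ℂ := (s : ℂ) + (j₁ : ℂ) / (T : ℂ) with hβ₁
    set β₂ : ℂ := (r : ℂ) + (j₂ : ℂ) / (T : ℂ) with hβ₂
    have key : ∀ w : W, ∀ m : ℂ, (¬ ∃ mm : ℤ, m = (mm : ℂ) ∧ mm ≤ -1) →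
        mulXZ z β₁ (Ydual M.Y v α w) (m + β₂) = 0 := by
      intro w m hm
      set f : ℂ → ℂ := Ydual M.Y v α w with hfdef
      have hf : Adm f := adm_Ydual hT M v α hlin w
      have hg : Adm (substZ z f) := adm_substZ hf z
      have hML := ML (-z) β₂ β₁ (substZ z f) hg m
      simp only [substZ_neg_substZ z f hf, mulXZ_neg_eq] at hML
      rw [mulXpZ_neg_eq, mulXZ_shift] at hML
      rw [hML]
      exact substZ_powerSeries (-z) _ (fun m' hm' => hrs m' hm' w) m hm
    refine ⟨s, ?_, ⟨(r : ℤ), ?_⟩⟩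
    · intro n hn w
      have harg : n + (j₂ : ℂ) / (T : ℂ) = (n - (r : ℂ)) + β₂ := by rw [hβ₂]; ring
      rw [harg]
      refine key w (n - (r : ℂ)) ?_
      rintro ⟨mm, heq, -⟩
      refine hn (mm + (r : ℤ)) ?_
      push_cast
      linear_combination heq
    · intro m hmr w
      have harg : (m : ℂ) + (j₂ : ℂ) / (T : ℂ) = (((m - (r : ℤ) : ℤ)) : ℂ) + β₂ := by
        rw [hβ₂]; push_cast; ring
      rw [harg]
      refine key w _ ?_
      rintro ⟨mm, heq, hmm⟩
      have : (m - (r : ℤ) : ℤ) = mm := by exact_mod_cast heq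
      omega
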